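/- For norm-one quaternions a, b, the map T_{a,b} ∘ σ (where T_{a,b}(x) = axb and σ is quaternion conjugation) is an involution (i.e., (T_{a,b}∘σ)² = id) if and only if b = a or b = −a. -/

import Mathlib

open Quaternion

set_option maxHeartbeats 1000000 in
theorem stmt_3 (a b : Quaternion ℝ) (ha : ‖a‖ = 1) (hb : ‖b‖ = 1) :
    (∀ x : Quaternion ℝ, a * star (a * star x * b) * b = x) ↔ (b = a ∨ b = -a) := by
  have ha1 : a * star a = 1 := by
    rw [Quaternion.self_mul_star, Quaternion.normSq_eq_norm_mul_self, ha]; norm_num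
  have ha2 : star a * a = 1 := by
    rw [Quaternion.star_mul_self, Quaternion.normSq_eq_norm_mul_self, ha]; norm_num
  have hb1 : b * star b = 1 := by
    rw [Quaternion.self_mul_star, Quaternion.normSq_eq_norm_mul_self, hb]; norm_num
  have hb2 : star b * b = 1 := by
    rw [Quaternion.star_mul_self, Quaternion.normSq_eq_norm_mul_self, hb]; norm_num
  constructor
  · intro h
    obtain ⟨c, hc⟩ : ∃ c, c = a * star b := ⟨_, rfl⟩
    have hcs : star c = b * star a := by rw [hc, star_mul, star_star]
    have hcc : c * star c = 1 := by
      rw [hcs, hc, mul_assoc, ← mul_assoc (star b), hb2, one_mul, ha1]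
    have hcc2 : star c * c = 1 := by
      rw [hcs, hc, mul_assoc, ← mul_assoc (star a), ha2, one_mul, hb1]
    have key : ∀ x : Quaternion ℝ, c * x * (star a * b) = x := by
      intro x
      have hx := h x
      rw [star_mul, star_mul, star_star] at hx
      rw [hc]
      simp only [mul_assoc] at hx ⊢
      exact hx
    have hd : star a * b = star c := by
      have h1 := key 1
      calc star a * b = star c * c * (1 * (star a * b)) := by rw [hcc2]; simp
        _ = star c * (c * 1 * (star a * b)) := by simp only [mul_assoc, one_mul]
        _ = star c := by rw [h1, mul_one]
    have comm : ∀ x : Quaternion ℝ, c * x = x * c := by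
      intro x
      have hx := key x
      rw [hd] at hx
      calc c * x = c * x * (star c * c) := by rw [hcc2, mul_one]
        _ = (c * x * star c) * c := by simp only [mul_assoc]
        _ = x * c := by rw [hx]
    have hI := comm ⟨0, 1, 0, 0⟩
    have hJ := comm ⟨0, 0, 1, 0⟩
    rw [Quaternion.ext_iff] at hI hJ
    erw [Quaternion.re_mul c, Quaternion.imI_mul c, Quaternion.imJ_mul c,
      Quaternion.imK_mul c, Quaternion.re_mul _ c, Quaternion.imI_mul _ c, Quaternion.imJ_mul _ c,
      Quaternion.imK_mul _ c] at hI hJ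
    dsimp only at hI hJ
    obtain ⟨h1, h2, h3, h4⟩ := hI
    obtain ⟨h5, h6, h7, h8⟩ := hJ
    simp only [mul_zero, mul_one, zero_mul, one_mul, zero_add, add_zero, sub_zero,
      zero_sub, mul_neg, neg_zero] at h1 h2 h3 h4 h5 h6 h7 h8
    have hiI : c.imI = 0 := by linarith
    have hiJ : c.imJ = 0 := by linarith
    have hiK : c.imK = 0 := by linarith
    have hcre : c = (c.re : Quaternion ℝ) := by
      ext <;> simp [hiI, hiJ, hiK]
    have hre2 : c.re * c.re = 1 := by
      have h3 := hcc
      rw [hcre, Quaternion.star_coe, ← Quaternion.coe_mul] at h3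
      exact (Quaternion.coe_injective (by exact_mod_cast h3))
    have hba : b = star c * a := by
      rw [hcs, mul_assoc, ha2, mul_one]
    rcases mul_self_eq_one_iff.mp hre2 with h1 | h1
    · left; rw [hba, hcre, h1]; simp
    · right; rw [hba, hcre, h1]; simp
  · rintro (rfl | rfl) x
    · rw [star_mul, star_mul, star_star, ← mul_assoc, ← mul_assoc, ha1, one_mul,
        mul_assoc, ha2, mul_one]
    · have ha1' : a * star (-a) = -1 := by rw [star_neg, mul_neg, ha1]
      rw [star_mul, star_mul, star_star, ← mul_assoc, ← mul_assoc, ha1', neg_one_mul,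
        mul_assoc, mul_neg, ha2, mul_neg, mul_one, neg_neg]
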